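/- Let A = A₁ ⊕ A₂ on H₁ ⊕ H₂ with A₁ invertible and A₂ p-nilpotent, and suppose p < m. If δ_{A,A}^m(X) = Σ_{j=0}^m (-1)^j C(m,j) A^{m-j} X A^j = 0 for X = [X_{ik}], then X₁₂ = 0 and X₂₁ = 0, i.e., X = X₁₁ ⊕ X₂₂. -/

import Mathlib

open ContinuousLinearMap in
/-- Injectivity of `Y ↦ A₁ ∘ Y - Y ∘ A₂` when `A₁` is invertible and `A₂` nilpotent. -/
theorem aux_inj12 {H₁ H₂ : Type*}
    [NormedAddCommGroup H₁] [InnerProductSpace ℂ H₁] [CompleteSpace H₁]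
    [NormedAddCommGroup H₂] [InnerProductSpace ℂ H₂] [CompleteSpace H₂]
    (A₁ A₁' : H₁ →L[ℂ] H₁) (A₂ : H₂ →L[ℂ] H₂) (p : ℕ)
    (hA₁' : A₁' * A₁ = 1) (hA₂ : A₂ ^ p = 0)
    (Y : H₂ →L[ℂ] H₁) (h0 : A₁ ∘L Y - Y ∘L A₂ = 0) : Y = 0 := by
  have hc : A₁ ∘L Y = Y ∘L A₂ := by rwa [sub_eq_zero] at h0
  have hk : ∀ k : ℕ, Y = (A₁' ^ k) ∘L Y ∘L (A₂ ^ k) := by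
    intro k
    induction k with
    | zero => simp [one_def]
    | succ k ih =>
      have : (A₁' ^ (k + 1)) ∘L Y ∘L (A₂ ^ (k + 1))
          = (A₁' ^ k) ∘L ((A₁' ∘L (A₁ ∘L Y)) ∘L (A₂ ^ k)) := by
        rw [hc]
        ext v
        simp only [coe_comp', Function.comp_apply, pow_succ A₁', pow_succ' A₂, mul_apply, mul_def]
      rw [this]
      have hid : A₁' ∘L (A₁ ∘L Y) = Y := by
        rw [← comp_assoc, ← mul_def, hA₁', one_def, id_comp]
      rw [hid, ← ih]
  simpa [hA₂] using hk p

open ContinuousLinearMap in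
/-- Injectivity of `Y ↦ A₂ ∘ Y - Y ∘ A₁` when `A₁` is invertible and `A₂` nilpotent. -/
theorem aux_inj21 {H₁ H₂ : Type*}
    [NormedAddCommGroup H₁] [InnerProductSpace ℂ H₁] [CompleteSpace H₁]
    [NormedAddCommGroup H₂] [InnerProductSpace ℂ H₂] [CompleteSpace H₂]
    (A₁ A₁' : H₁ →L[ℂ] H₁) (A₂ : H₂ →L[ℂ] H₂) (p : ℕ)
    (hA₁ : A₁ * A₁' = 1) (hA₂ : A₂ ^ p = 0)
    (Y : H₁ →L[ℂ] H₂) (h0 : A₂ ∘L Y - Y ∘L A₁ = 0) : Y = 0 := by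
  have hc : A₂ ∘L Y = Y ∘L A₁ := by rwa [sub_eq_zero] at h0
  have hk : ∀ k : ℕ, Y = (A₂ ^ k) ∘L Y ∘L (A₁' ^ k) := by
    intro k
    induction k with
    | zero => simp [one_def]
    | succ k ih =>
      have : (A₂ ^ (k + 1)) ∘L Y ∘L (A₁' ^ (k + 1))
          = (A₂ ^ k) ∘L (((A₂ ∘L Y) ∘L A₁') ∘L (A₁' ^ k)) := by
        ext v
        simp only [coe_comp', Function.comp_apply, pow_succ A₂, pow_succ' A₁', mul_apply, mul_def]
      rw [this, hc]
      have hid : (Y ∘L A₁) ∘L A₁' = Y := by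
        rw [comp_assoc, ← mul_def, hA₁, one_def, comp_id]
      rw [hid, ← ih]
  simpa [hA₂] using hk p

open ContinuousLinearMap in
/-- If `A = A₁ ⊕ A₂` with `A₁` invertible, `A₂` `p`-nilpotent, `p < m`, and
`δ_{A,A}^m(X) = 0`, then the off-diagonal entries of `X` vanish: `X = X₁₁ ⊕ X₂₂`. -/
theorem stmt_15 {H₁ H₂ : Type*}
    [NormedAddCommGroup H₁] [InnerProductSpace ℂ H₁] [CompleteSpace H₁]
    [NormedAddCommGroup H₂] [InnerProductSpace ℂ H₂] [CompleteSpace H₂]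
    (A₁ A₁' : H₁ →L[ℂ] H₁) (A₂ : H₂ →L[ℂ] H₂) (p m : ℕ) (hp : 1 ≤ p) (hpm : p < m)
    (hA₁ : A₁ * A₁' = 1) (hA₁' : A₁' * A₁ = 1) (hA₂ : A₂ ^ p = 0)
    (X : H₁ × H₂ →L[ℂ] H₁ × H₂)
    (h : (fun Y : H₁ × H₂ →L[ℂ] H₁ × H₂ =>
        (A₁.prodMap A₂) * Y - Y * (A₁.prodMap A₂))^[m] X = 0) :
    (fst ℂ H₁ H₂) ∘L X ∘L (inr ℂ H₁ H₂) = 0 ∧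
      (snd ℂ H₁ H₂) ∘L X ∘L (inl ℂ H₁ H₂) = 0 := by
  set D : (H₁ × H₂ →L[ℂ] H₁ × H₂) → (H₁ × H₂ →L[ℂ] H₁ × H₂) :=
    fun Y => (A₁.prodMap A₂) * Y - Y * (A₁.prodMap A₂) with hD
  set T₁₂ : (H₂ →L[ℂ] H₁) → (H₂ →L[ℂ] H₁) := fun Z => A₁ ∘L Z - Z ∘L A₂ with hT₁₂
  set T₂₁ : (H₁ →L[ℂ] H₂) → (H₁ →L[ℂ] H₂) := fun Z => A₂ ∘L Z - Z ∘L A₁ with hT₂₁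
  have step12 : ∀ Y : H₁ × H₂ →L[ℂ] H₁ × H₂,
      (fst ℂ H₁ H₂) ∘L (D Y) ∘L (inr ℂ H₁ H₂)
        = T₁₂ ((fst ℂ H₁ H₂) ∘L Y ∘L (inr ℂ H₁ H₂)) := by
    intro Y; ext v; simp [hD, hT₁₂, mul_apply]
  have step21 : ∀ Y : H₁ × H₂ →L[ℂ] H₁ × H₂,
      (snd ℂ H₁ H₂) ∘L (D Y) ∘L (inl ℂ H₁ H₂)
        = T₂₁ ((snd ℂ H₁ H₂) ∘L Y ∘L (inl ℂ H₁ H₂)) := by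
    intro Y; ext v; simp [hD, hT₂₁, mul_apply]
  have iter12 : ∀ (n : ℕ) (Y : H₁ × H₂ →L[ℂ] H₁ × H₂),
      (fst ℂ H₁ H₂) ∘L (D^[n] Y) ∘L (inr ℂ H₁ H₂)
        = T₁₂^[n] ((fst ℂ H₁ H₂) ∘L Y ∘L (inr ℂ H₁ H₂)) := by
    intro n
    induction n with
    | zero => intro Y; simp
    | succ n ih =>
      intro Y
      rw [Function.iterate_succ_apply, Function.iterate_succ_apply, ih, step12]
  have iter21 : ∀ (n : ℕ) (Y : H₁ × H₂ →L[ℂ] H₁ × H₂),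
      (snd ℂ H₁ H₂) ∘L (D^[n] Y) ∘L (inl ℂ H₁ H₂)
        = T₂₁^[n] ((snd ℂ H₁ H₂) ∘L Y ∘L (inl ℂ H₁ H₂)) := by
    intro n
    induction n with
    | zero => intro Y; simp
    | succ n ih =>
      intro Y
      rw [Function.iterate_succ_apply, Function.iterate_succ_apply, ih, step21]
  have inj12 : ∀ (n : ℕ) (Z : H₂ →L[ℂ] H₁), T₁₂^[n] Z = 0 → Z = 0 := by
    intro n
    induction n with
    | zero => intro Z hZ; simpa using hZ
    | succ n ih =>
      intro Z hZ
      rw [Function.iterate_succ_apply'] at hZ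
      exact ih Z (aux_inj12 A₁ A₁' A₂ p hA₁' hA₂ _ hZ)
  have inj21 : ∀ (n : ℕ) (Z : H₁ →L[ℂ] H₂), T₂₁^[n] Z = 0 → Z = 0 := by
    intro n
    induction n with
    | zero => intro Z hZ; simpa using hZ
    | succ n ih =>
      intro Z hZ
      rw [Function.iterate_succ_apply'] at hZ
      exact ih Z (aux_inj21 A₁ A₁' A₂ p hA₁ hA₂ _ hZ)
  constructor
  · apply inj12 m
    rw [← iter12 m X, h]
    simp
  · apply inj21 m
    rw [← iter21 m X, h]
    simp
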